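/- Let m be a positive integer and m' > 0; let Y and X be independent random variables with unit-mean Gamma densities f_G(·, m) and f_G(·, m') respectively, and define O(α) = P{Y < α X} for α > 0. Then the function R : (0, ∞) → ℝ, R(η) = ∫₀^∞ (1 − O(η γ))/(1 + γ) dγ, is finite and strictly decreasing on (0, ∞). -/

import Mathlib

open MeasureTheory ProbabilityTheory Real

noncomputable def fG (s x : ℝ) : ℝ :=
  if 0 < x then s ^ s * x ^ (s - 1) * Real.exp (-s * x) / Real.Gamma s else 0

lemma fG_nonneg {s : ℝ} (hs : 0 < s) (x : ℝ) : 0 ≤ fG s x := by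
  unfold fG
  split_ifs with h
  · positivity
  · exact le_refl _

lemma fG_measurable (s : ℝ) : Measurable (fG s) := by
  unfold fG
  refine Measurable.ite measurableSet_Ioi ?_ measurable_const
  fun_prop

lemma fG_zero_of_nonpos {s x : ℝ} (hx : x ≤ 0) : fG s x = 0 := by
  unfold fG; rw [if_neg (not_lt.mpr hx)]

lemma fG_pos {s x : ℝ} (hs : 0 < s) (hx : 0 < x) : 0 < fG s x := by
  unfold fG; rw [if_pos hx]
  have := Real.Gamma_pos_of_pos hs
  have h1 : (0:ℝ) < s ^ s := Real.rpow_pos_of_pos hs s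
  have h2 : (0:ℝ) < x ^ (s-1) := Real.rpow_pos_of_pos hx _
  positivity

lemma withDensity_fG_Iic_zero (s : ℝ) :
    (volume.withDensity fun x => ENNReal.ofReal (fG s x)) (Set.Iic 0) = 0 := by
  rw [withDensity_apply _ measurableSet_Iic]
  rw [setLIntegral_congr_fun measurableSet_Iic
    (fun x (hx : x ≤ 0) => by rw [fG_zero_of_nonpos hx, ENNReal.ofReal_zero])]
  exact lintegral_zero

lemma withDensity_fG_pos {s a b : ℝ} (hs : 0 < s) (ha : 0 < a) (hab : a < b) :
    0 < (volume.withDensity fun x => ENNReal.ofReal (fG s x)) (Set.Ioo a b) := by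
  rw [withDensity_apply _ measurableSet_Ioo]
  set c := s ^ s * min (a ^ (s - 1)) (b ^ (s - 1)) * Real.exp (-s * b) / Real.Gamma s with hc
  have hΓ := Real.Gamma_pos_of_pos hs
  have hss := Real.rpow_pos_of_pos hs s
  have hcpos : 0 < c := by
    have h1 : 0 < a ^ (s - 1) := Real.rpow_pos_of_pos ha _
    have h2 : 0 < b ^ (s - 1) := Real.rpow_pos_of_pos (ha.trans hab) _
    have : 0 < min (a ^ (s - 1)) (b ^ (s - 1)) := lt_min h1 h2
    positivity
  have hbound : ∀ x ∈ Set.Ioo a b, ENNReal.ofReal c ≤ ENNReal.ofReal (fG s x) := by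
    intro x hx
    apply ENNReal.ofReal_le_ofReal
    have hxpos : 0 < x := ha.trans hx.1
    unfold fG; rw [if_pos hxpos, hc]
    have hmin : min (a ^ (s - 1)) (b ^ (s - 1)) ≤ x ^ (s - 1) := by
      rcases le_or_gt 0 (s - 1) with h | h
      · exact le_trans (min_le_left _ _) (Real.rpow_le_rpow ha.le hx.1.le h)
      · exact le_trans (min_le_right _ _) (Real.rpow_le_rpow_of_nonpos hxpos hx.2.le h.le)
    have hexp : Real.exp (-s * b) ≤ Real.exp (-s * x) := by
      apply Real.exp_le_exp.mpr
      nlinarith [hx.2]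
    have hmin0 : 0 ≤ min (a ^ (s - 1)) (b ^ (s - 1)) := by
      have h1 : 0 < a ^ (s - 1) := Real.rpow_pos_of_pos ha _
      have h2 : 0 < b ^ (s - 1) := Real.rpow_pos_of_pos (ha.trans hab) _
      exact (lt_min h1 h2).le
    gcongr
    all_goals first | exact hΓ | exact hmin | exact hexp | positivity
  calc (0 : ENNReal) < ENNReal.ofReal c * volume (Set.Ioo a b) := by
        rw [Real.volume_Ioo]
        exact ENNReal.mul_pos (by simp [ENNReal.ofReal_pos, hcpos])
          (by simp [hab, ENNReal.ofReal_pos])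
    _ = ∫⁻ _ in Set.Ioo a b, ENNReal.ofReal c := (setLIntegral_const _ _).symm
    _ ≤ ∫⁻ x in Set.Ioo a b, ENNReal.ofReal (fG s x) :=
        setLIntegral_mono ((fG_measurable s).ennreal_ofReal) hbound

lemma pow_le_factorial_mul_exp (k : ℕ) {y : ℝ} (hy : 0 ≤ y) :
    y ^ k ≤ (k.factorial : ℝ) * Real.exp (k * y) := by
  rcases Nat.eq_zero_or_pos k with h | h
  · simp [h]
  · have h1 : y ^ k / (k.factorial : ℝ) ≤ Real.exp y := by
      calc y ^ k / (k.factorial : ℝ)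
          ≤ ∑ i ∈ Finset.range (k + 1), y ^ i / (i.factorial : ℝ) := by
            refine Finset.single_le_sum (f := fun i => y ^ i / (i.factorial : ℝ)) ?_ ?_
            · intro i _; positivity
            · simp
        _ ≤ Real.exp y := Real.sum_le_exp_of_nonneg hy _
    have h2 : Real.exp y ≤ Real.exp (k * y) := by
      apply Real.exp_le_exp.mpr
      nlinarith [(Nat.one_le_cast (α := ℝ)).mpr h]
    have hf : (0:ℝ) < k.factorial := by exact_mod_cast Nat.factorial_pos k
    calc y ^ k = y ^ k / (k.factorial : ℝ) * k.factorial := by field_simp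
      _ ≤ Real.exp (k * y) * k.factorial := by
          apply mul_le_mul_of_nonneg_right (h1.trans h2) hf.le
      _ = (k.factorial : ℝ) * Real.exp (k * y) := mul_comm _ _

lemma fG_le_exp (m : ℕ) (hm : 0 < m) (y : ℝ) :
    fG (m : ℝ) y ≤ (m : ℝ) ^ m * Real.exp (-y) := by
  have hpos : (0:ℝ) < (m:ℝ) ^ m := by positivity
  unfold fG
  split_ifs with h
  · set k := m - 1 with hk
    have hmk : m = k + 1 := (Nat.succ_pred_eq_of_pos hm).symm
    have hcast : ((m : ℝ)) - 1 = (k : ℝ) := by rw [hmk]; push_cast; ring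
    have hΓ : Real.Gamma (m : ℝ) = (k.factorial : ℝ) := by
      rw [hmk]; push_cast [Real.Gamma_nat_eq_factorial]
      norm_num [Real.Gamma_nat_eq_factorial]
    have hrpow : (m:ℝ) ^ ((m:ℝ)) = (m:ℝ) ^ m := Real.rpow_natCast _ m
    have hy : y ^ ((m:ℝ) - 1) = y ^ k := by rw [hcast, Real.rpow_natCast]
    rw [hΓ, hrpow, hy]
    have hb := pow_le_factorial_mul_exp k h.le
    have hf : (0:ℝ) < k.factorial := by exact_mod_cast Nat.factorial_pos k
    have hexp : Real.exp (k * y) * Real.exp (-(m:ℝ) * y) = Real.exp (-y) := by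
      rw [← Real.exp_add]; congr 1
      rw [hmk]; push_cast; ring
    calc (m:ℝ) ^ m * y ^ k * Real.exp (-(m:ℝ) * y) / (k.factorial : ℝ)
        ≤ (m:ℝ) ^ m * ((k.factorial : ℝ) * Real.exp (k * y)) * Real.exp (-(m:ℝ) * y) /
            (k.factorial : ℝ) := by
          gcongr
      _ = (m:ℝ) ^ m * (Real.exp (k * y) * Real.exp (-(m:ℝ) * y)) := by field_simp
      _ = (m:ℝ) ^ m * Real.exp (-y) := by rw [hexp]
  · positivity

lemma meas_Ici_le (m : ℕ) (hm : 0 < m) (t : ℝ) :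
    (volume.withDensity fun x => ENNReal.ofReal (fG (m : ℝ) x)) (Set.Ici t)
      ≤ ENNReal.ofReal ((m : ℝ) ^ m * Real.exp (-t)) := by
  rw [withDensity_apply _ measurableSet_Ici]
  have hint : IntegrableOn (fun x => (m : ℝ) ^ m * Real.exp (-x)) (Set.Ici t) := by
    rw [IntegrableOn, ← MeasureTheory.restrict_Ioi_eq_restrict_Ici]
    have := (exp_neg_integrableOn_Ioi t (zero_lt_one)).const_mul ((m : ℝ) ^ m)
    simpa using this
  calc ∫⁻ x in Set.Ici t, ENNReal.ofReal (fG (m : ℝ) x)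
      ≤ ∫⁻ x in Set.Ici t, ENNReal.ofReal ((m : ℝ) ^ m * Real.exp (-x)) := by
        refine setLIntegral_mono (by fun_prop) fun x _ => ?_
        exact ENNReal.ofReal_le_ofReal (fG_le_exp m hm x)
    _ = ENNReal.ofReal (∫ x in Set.Ici t, (m : ℝ) ^ m * Real.exp (-x)) := by
        rw [← MeasureTheory.ofReal_integral_eq_lintegral_ofReal hint]
        exact ae_of_all _ fun x => by positivity
    _ = ENNReal.ofReal ((m : ℝ) ^ m * Real.exp (-t)) := by
        rw [MeasureTheory.integral_Ici_eq_integral_Ioi, integral_const_mul, integral_exp_neg_Ioi]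

lemma meas_Iic_le {m' : ℝ} (hm' : 0 < m') {t : ℝ} (ht : 0 < t) :
    (volume.withDensity fun x => ENNReal.ofReal (fG m' x)) (Set.Iic t)
      ≤ ENNReal.ofReal (m' ^ m' / Real.Gamma m' * (t ^ m' / m')) := by
  have hsplit : Set.Iic t = Set.Iic 0 ∪ Set.Ioc 0 t := (Set.Iic_union_Ioc_eq_Iic ht.le).symm
  set μ := volume.withDensity fun x => ENNReal.ofReal (fG m' x) with hμ
  set K := m' ^ m' / Real.Gamma m' with hK
  have hΓ := Real.Gamma_pos_of_pos hm'
  have hKpos : 0 < K := by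
    have := Real.rpow_pos_of_pos hm' m'
    positivity
  have hIoc : μ (Set.Ioc 0 t) ≤ ENNReal.ofReal (K * (t ^ m' / m')) := by
    rw [hμ, withDensity_apply _ measurableSet_Ioc]
    have hint : IntegrableOn (fun x => K * x ^ (m' - 1)) (Set.Ioc 0 t) :=
      ((intervalIntegral.intervalIntegrable_rpow' (by linarith)).1).const_mul K
    calc ∫⁻ x in Set.Ioc 0 t, ENNReal.ofReal (fG m' x)
        ≤ ∫⁻ x in Set.Ioc 0 t, ENNReal.ofReal (K * x ^ (m' - 1)) := by
          refine setLIntegral_mono (by fun_prop) fun x hx => ?_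
          apply ENNReal.ofReal_le_ofReal
          unfold fG; rw [if_pos hx.1, hK]
          have h1 : 0 < x ^ (m' - 1) := Real.rpow_pos_of_pos hx.1 _
          have h2 : Real.exp (-m' * x) ≤ 1 := by
            rw [Real.exp_le_one_iff]
            nlinarith [hx.1]
          calc m' ^ m' * x ^ (m' - 1) * Real.exp (-m' * x) / Real.Gamma m'
              ≤ m' ^ m' * x ^ (m' - 1) * 1 / Real.Gamma m' := by
                gcongr
            _ = m' ^ m' / Real.Gamma m' * x ^ (m' - 1) := by ring
      _ = ENNReal.ofReal (∫ x in Set.Ioc 0 t, K * x ^ (m' - 1)) := by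
          rw [← MeasureTheory.ofReal_integral_eq_lintegral_ofReal hint]
          refine (ae_restrict_iff' measurableSet_Ioc).mpr (ae_of_all _ fun x hx => ?_)
          have := Real.rpow_pos_of_pos hx.1 (m' - 1)
          positivity
      _ = ENNReal.ofReal (K * (t ^ m' / m')) := by
          congr 1
          rw [← intervalIntegral.integral_of_le ht.le, intervalIntegral.integral_const_mul,
            integral_rpow (Or.inl (by linarith))]
          rw [Real.zero_rpow (by linarith : m' - 1 + 1 ≠ 0)]
          ring_nf
  calc μ (Set.Iic t) ≤ μ (Set.Iic 0) + μ (Set.Ioc 0 t) := by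
        rw [hsplit]; exact measure_union_le _ _
    _ = μ (Set.Ioc 0 t) := by rw [hμ, withDensity_fG_Iic_zero, zero_add]
    _ ≤ ENNReal.ofReal (K * (t ^ m' / m')) := hIoc

lemma exp_neg_le_two_div_sq {x : ℝ} (hx : 0 < x) : Real.exp (-x) ≤ 2 / x ^ 2 := by
  have h1 := Real.quadratic_le_exp_of_nonneg hx.le
  have h2 : x ^ 2 / 2 ≤ Real.exp x := by nlinarith
  have h3 : (0:ℝ) < x ^ 2 / 2 := by positivity
  rw [Real.exp_neg]
  calc (Real.exp x)⁻¹ ≤ (x ^ 2 / 2)⁻¹ := inv_anti₀ h3 h2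
    _ = 2 / x ^ 2 := by field_simp

/-- Theorem 2 (proof step): with `Y, X` independent unit-mean Gamma variables of shapes
`m` (positive integer) and `m' > 0`, and `O(α) = P{Y < αX}`, the function
`R(η) = ∫₀^∞ (1 − O(ηγ))/(1+γ) dγ` is finite and strictly decreasing on `(0, ∞)`. -/
theorem capacity_strict_anti
    {Ω : Type*} [MeasurableSpace Ω] (P : Measure Ω) [IsProbabilityMeasure P]
    (m : ℕ) (hm : 0 < m) (m' : ℝ) (hm' : 0 < m')
    (X Y : Ω → ℝ) (hX : Measurable X) (hY : Measurable Y)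
    (hindep : IndepFun Y X P)
    (hYlaw : P.map Y = volume.withDensity (fun x => ENNReal.ofReal (fG (m : ℝ) x)))
    (hXlaw : P.map X = volume.withDensity (fun x => ENNReal.ofReal (fG m' x)))
    (O : ℝ → ℝ) (hO : ∀ α, O α = (P {ω | Y ω < α * X ω}).toReal)
    (R : ℝ → ℝ)
    (hR : ∀ η, R η = ∫ γ in Set.Ioi (0 : ℝ), (1 - O (η * γ)) / (1 + γ)) :
    (∀ η > 0, IntegrableOn (fun γ => (1 - O (η * γ)) / (1 + γ)) (Set.Ioi (0 : ℝ))) ∧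
      StrictAntiOn R (Set.Ioi 0) := by
  have hS : ∀ α : ℝ, MeasurableSet {ω | Y ω < α * X ω} :=
    fun α => measurableSet_lt hY (hX.const_mul α)
  have hXnull : P {ω | X ω ≤ 0} = 0 := by
    have h : {ω | X ω ≤ 0} = X ⁻¹' Set.Iic 0 := rfl
    rw [h, ← Measure.map_apply hX measurableSet_Iic, hXlaw, withDensity_fG_Iic_zero]
  -- O is monotone
  have hOmono : Monotone O := by
    intro α β hab
    rw [hO, hO]
    apply ENNReal.toReal_mono (measure_ne_top P _)
    calc P {ω | Y ω < α * X ω} ≤ P ({ω | Y ω < β * X ω} ∪ {ω | X ω ≤ 0}) := by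
          apply measure_mono; intro ω hω
          rcases le_or_gt (X ω) 0 with h | h
          · exact Or.inr h
          · left
            have hω' : Y ω < α * X ω := hω
            have h2 : α * X ω ≤ β * X ω := by nlinarith [mul_nonneg (sub_nonneg.mpr hab) h.le]
            exact lt_of_lt_of_le hω' h2
      _ ≤ P {ω | Y ω < β * X ω} + P {ω | X ω ≤ 0} := measure_union_le _ _
      _ = P {ω | Y ω < β * X ω} := by rw [hXnull, add_zero]
  have hOnonneg : ∀ α, 0 ≤ O α := fun α => by rw [hO]; exact ENNReal.toReal_nonneg
  have hOle_one : ∀ α, O α ≤ 1 := fun α => by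
    rw [hO]
    exact le_trans (ENNReal.toReal_mono ENNReal.one_ne_top prob_le_one) (by norm_num)
  -- strict monotonicity of O on positives
  have hOstrict : ∀ a b : ℝ, 0 < a → a < b → O a < O b := by
    intro a b ha hab
    have hpair : P.map (fun ω => (Y ω, X ω)) = (P.map Y).prod (P.map X) :=
      (indepFun_iff_map_prod_eq_prod_map_map hY.aemeasurable hX.aemeasurable).mp hindep
    set I := Set.Ioo ((a + b) / 2) b with hI
    set J := Set.Ioo 1 ((a + b) / (2 * a)) with hJ
    set G := (fun ω => (Y ω, X ω)) ⁻¹' (I ×ˢ J) with hGdef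
    have hGmeas : MeasurableSet G :=
      (hY.prodMk hX) (measurableSet_Ioo.prod measurableSet_Ioo)
    have hG : P G = (P.map Y) I * (P.map X) J := by
      rw [hGdef, ← Measure.map_apply (hY.prodMk hX) (measurableSet_Ioo.prod measurableSet_Ioo),
        hpair, Measure.prod_prod]
    have hJ1 : 1 < (a + b) / (2 * a) := by
      rw [lt_div_iff₀ (by positivity)]
      linarith
    have hGpos : 0 < P G := by
      rw [hG, hYlaw, hXlaw]
      exact ENNReal.mul_pos
        (withDensity_fG_pos (by positivity) (by linarith : (0:ℝ) < (a + b) / 2) (by linarith)).ne'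
        (withDensity_fG_pos hm' one_pos hJ1).ne'
    have hGsub : ∀ ω ∈ G, Y ω < b * X ω ∧ ¬ (Y ω < a * X ω) := by
      intro ω hω
      obtain ⟨⟨hY1, hY2⟩, hX1, hX2⟩ := hω
      constructor
      · have : b < b * X ω := by nlinarith
        linarith
      · push_neg
        have : a * X ω ≤ (a + b) / 2 := by
          have e : a * ((a + b) / (2 * a)) = (a + b) / 2 := by field_simp
          nlinarith [mul_lt_mul_of_pos_left hX2 ha]
        linarith
    have key : P {ω | Y ω < a * X ω} + P G ≤ P {ω | Y ω < b * X ω} := by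
      rw [← measure_union ?hd hGmeas]
      case hd =>
        rw [Set.disjoint_left]
        intro ω hω hωG
        exact (hGsub ω hωG).2 hω
      calc P ({ω | Y ω < a * X ω} ∪ G)
          ≤ P ({ω | Y ω < b * X ω} ∪ {ω | X ω ≤ 0}) := by
            apply measure_mono
            rintro ω (hω | hω)
            · rcases le_or_gt (X ω) 0 with h | h
              · exact Or.inr h
              · left
                have hω' : Y ω < a * X ω := hω
                have h2 : a * X ω ≤ b * X ω := by nlinarith
                exact lt_of_lt_of_le hω' h2
            · exact Or.inl (hGsub ω hω).1
        _ ≤ P {ω | Y ω < b * X ω} + P {ω | X ω ≤ 0} := measure_union_le _ _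
        _ = P {ω | Y ω < b * X ω} := by rw [hXnull, add_zero]
    rw [hO, hO]
    apply ENNReal.toReal_strict_mono (measure_ne_top P _)
    calc P {ω | Y ω < a * X ω}
        < P {ω | Y ω < a * X ω} + P G :=
          ENNReal.lt_add_right (measure_ne_top P _) hGpos.ne'
      _ ≤ P {ω | Y ω < b * X ω} := key
  -- tail bound for 1 - O
  have hOtail : ∀ α t : ℝ, 0 < α → 0 < t →
      1 - O α ≤ m' ^ m' / Real.Gamma m' * (t ^ m' / m')
        + (m : ℝ) ^ m * Real.exp (-(α * t)) := by
    intro α t hα ht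
    have h1O : 1 - O α = (P {ω | Y ω < α * X ω}ᶜ).toReal := by
      rw [hO, measure_compl (hS α) (measure_ne_top _ _), measure_univ,
        ENNReal.toReal_sub_of_le prob_le_one ENNReal.one_ne_top, ENNReal.toReal_one]
    have hsub : {ω | Y ω < α * X ω}ᶜ ⊆ (X ⁻¹' Set.Iic t) ∪ (Y ⁻¹' Set.Ici (α * t)) := by
      intro ω hω
      simp only [Set.mem_compl_iff, Set.mem_setOf_eq, not_lt] at hω
      rcases le_or_gt (X ω) t with h | h
      · exact Or.inl h
      · right
        have h2 : α * t ≤ α * X ω := by nlinarith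
        exact le_trans h2 hω
    have hXbd : P (X ⁻¹' Set.Iic t) ≤
        ENNReal.ofReal (m' ^ m' / Real.Gamma m' * (t ^ m' / m')) := by
      rw [← Measure.map_apply hX measurableSet_Iic, hXlaw]
      exact meas_Iic_le hm' ht
    have hYbd : P (Y ⁻¹' Set.Ici (α * t)) ≤
        ENNReal.ofReal ((m : ℝ) ^ m * Real.exp (-(α * t))) := by
      rw [← Measure.map_apply hY measurableSet_Ici, hYlaw]
      exact meas_Ici_le m hm (α * t)
    have hA : (0:ℝ) ≤ m' ^ m' / Real.Gamma m' * (t ^ m' / m') := by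
      have h1 : (0:ℝ) < m' ^ m' := Real.rpow_pos_of_pos hm' _
      have h2 : (0:ℝ) < t ^ m' := Real.rpow_pos_of_pos ht _
      have h3 := Real.Gamma_pos_of_pos hm'
      positivity
    have hB : (0:ℝ) ≤ (m : ℝ) ^ m * Real.exp (-(α * t)) := by positivity
    have htot : P {ω | Y ω < α * X ω}ᶜ ≤
        ENNReal.ofReal (m' ^ m' / Real.Gamma m' * (t ^ m' / m')
          + (m : ℝ) ^ m * Real.exp (-(α * t))) := by
      calc P {ω | Y ω < α * X ω}ᶜ
          ≤ P (X ⁻¹' Set.Iic t) + P (Y ⁻¹' Set.Ici (α * t)) :=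
            (measure_mono hsub).trans (measure_union_le _ _)
        _ ≤ ENNReal.ofReal (m' ^ m' / Real.Gamma m' * (t ^ m' / m'))
              + ENNReal.ofReal ((m : ℝ) ^ m * Real.exp (-(α * t))) := add_le_add hXbd hYbd
        _ = _ := (ENNReal.ofReal_add hA hB).symm
    rw [h1O]
    exact ENNReal.toReal_le_of_le_ofReal (by linarith) htot
  -- integrability
  have hInt : ∀ η > 0, IntegrableOn (fun γ => (1 - O (η * γ)) / (1 + γ)) (Set.Ioi (0 : ℝ)) := by
    intro η hη
    have hOmeas : Measurable O := hOmono.measurable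
    have hfmeas : Measurable fun γ : ℝ => (1 - O (η * γ)) / (1 + γ) :=
      (measurable_const.sub (hOmeas.comp (measurable_id.const_mul η))).div
        (measurable_const.add measurable_id)
    have h1 : IntegrableOn (fun γ => (1 - O (η * γ)) / (1 + γ)) (Set.Ioc (0:ℝ) 1) := by
      refine Integrable.mono' (g := fun _ => (1:ℝ))
        ((integrableOn_const_iff (C := (1:ℝ))).mpr (Or.inr ?_)) hfmeas.aestronglyMeasurable ?_
      · rw [Real.volume_Ioc]; exact ENNReal.ofReal_lt_top
      · refine (ae_restrict_iff' measurableSet_Ioc).mpr (ae_of_all _ fun γ hγ => ?_)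
        have h1γ : (0:ℝ) < 1 + γ := by linarith [hγ.1]
        rw [Real.norm_eq_abs,
          abs_of_nonneg (div_nonneg (by linarith [hOle_one (η * γ)]) h1γ.le), div_le_one h1γ]
        linarith [hOnonneg (η * γ), hγ.1]
    set C₁ := m' ^ m' / Real.Gamma m' / m' with hC₁
    set C₂ := 2 * (m : ℝ) ^ m / η ^ 2 with hC₂
    have hg : IntegrableOn
        (fun γ => C₁ * γ ^ (-(m' / 2) - 1) + C₂ * γ ^ (-2 : ℝ)) (Set.Ioi (1:ℝ)) := by
      exact ((integrableOn_Ioi_rpow_of_lt (by linarith) one_pos).const_mul C₁).add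
        ((integrableOn_Ioi_rpow_of_lt (by norm_num) one_pos).const_mul C₂)
    have h2 : IntegrableOn (fun γ => (1 - O (η * γ)) / (1 + γ)) (Set.Ioi (1:ℝ)) := by
      refine Integrable.mono' hg hfmeas.aestronglyMeasurable ?_
      refine (ae_restrict_iff' measurableSet_Ioi).mpr (ae_of_all _ fun γ hγ => ?_)
      have hγ1 : (1:ℝ) < γ := hγ
      have hγ0 : (0:ℝ) < γ := by linarith
      have h1γ : (0:ℝ) < 1 + γ := by linarith
      set t := γ ^ (-(1/2) : ℝ) with htdef
      have htpos : 0 < t := Real.rpow_pos_of_pos hγ0 _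
      have hb := hOtail (η * γ) t (by positivity) htpos
      have hnum : 0 ≤ 1 - O (η * γ) := by linarith [hOle_one (η * γ)]
      set A := m' ^ m' / Real.Gamma m' * (t ^ m' / m') with hAdef
      set B := (m : ℝ) ^ m * Real.exp (-(η * γ * t)) with hBdef
      have hA0 : 0 ≤ A := by
        have h1 : (0:ℝ) < m' ^ m' := Real.rpow_pos_of_pos hm' _
        have h2 : (0:ℝ) < t ^ m' := Real.rpow_pos_of_pos htpos _
        have h3 := Real.Gamma_pos_of_pos hm'
        positivity
      have hB0 : 0 ≤ B := by positivity
      have e1 : t ^ m' = γ ^ (-(1/2) * m') := by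
        rw [htdef]; exact (Real.rpow_mul hγ0.le _ _).symm
      have e3 : γ ^ (-(m' / 2) - 1) = γ ^ (-(1/2) * m') * γ⁻¹ := by
        rw [← Real.rpow_neg_one γ, ← Real.rpow_add hγ0]
        congr 1; ring
      have e2 : η * γ * t = η * γ ^ ((1:ℝ)/2) := by
        rw [htdef, mul_assoc]
        congr 1
        nth_rewrite 1 [← Real.rpow_one γ]
        rw [← Real.rpow_add hγ0]
        norm_num
      have e4 : (γ ^ ((1:ℝ)/2)) ^ 2 = γ := by
        rw [← Real.rpow_natCast (γ ^ ((1:ℝ)/2)) 2, ← Real.rpow_mul hγ0.le]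
        norm_num
      have e5 : γ ^ (-2 : ℝ) = (γ ^ 2)⁻¹ := by
        rw [show (-2:ℝ) = -(2:ℕ) by norm_num, Real.rpow_neg hγ0.le, Real.rpow_natCast]
      have hgh : (0:ℝ) < γ ^ ((1:ℝ)/2) := Real.rpow_pos_of_pos hγ0 _
      have hexpb : Real.exp (-(η * γ * t)) ≤ 2 / (η ^ 2 * γ) := by
        rw [e2]
        have := exp_neg_le_two_div_sq (mul_pos hη hgh)
        calc Real.exp (-(η * γ ^ ((1:ℝ)/2))) ≤ 2 / (η * γ ^ ((1:ℝ)/2)) ^ 2 := this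
          _ = 2 / (η ^ 2 * γ) := by rw [mul_pow, e4]
      have eA : A / γ = C₁ * γ ^ (-(m' / 2) - 1) := by
        rw [hAdef, e1, e3, hC₁]
        have h3 := Real.Gamma_pos_of_pos hm'
        field_simp
      have hBle : B / γ ≤ C₂ * γ ^ (-2 : ℝ) := by
        rw [hBdef, hC₂, e5]
        calc (m : ℝ) ^ m * Real.exp (-(η * γ * t)) / γ
            ≤ (m : ℝ) ^ m * (2 / (η ^ 2 * γ)) / γ := by gcongr
          _ = 2 * (m : ℝ) ^ m / η ^ 2 * (γ ^ 2)⁻¹ := by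
              field_simp
      rw [Real.norm_eq_abs, abs_of_nonneg (div_nonneg hnum h1γ.le)]
      calc (1 - O (η * γ)) / (1 + γ) ≤ (A + B) / (1 + γ) := by gcongr
        _ ≤ (A + B) / γ := by gcongr; linarith
        _ = A / γ + B / γ := add_div _ _ _
        _ ≤ C₁ * γ ^ (-(m' / 2) - 1) + C₂ * γ ^ (-2 : ℝ) := by
            rw [← eA]
            exact add_le_add le_rfl hBle
    have hu := h1.union h2
    rwa [Set.Ioc_union_Ioi_eq_Ioi zero_le_one] at hu
  refine ⟨hInt, ?_⟩
  intro η₁ h₁ η₂ h₂ hlt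
  simp only [Set.mem_Ioi] at h₁ h₂
  have hpos : ∀ γ ∈ Set.Ioi (0:ℝ),
      0 < (1 - O (η₁ * γ)) / (1 + γ) - (1 - O (η₂ * γ)) / (1 + γ) := by
    intro γ hγ
    have hγ0 : (0:ℝ) < γ := hγ
    have h1γ : (0:ℝ) < 1 + γ := by linarith
    have hOlt : O (η₁ * γ) < O (η₂ * γ) := hOstrict _ _ (by positivity) (by nlinarith)
    have hd : (1 - O (η₂ * γ)) / (1 + γ) < (1 - O (η₁ * γ)) / (1 + γ) := by
      gcongr
      all_goals linarith
    linarith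
  have key : 0 < ∫ γ in Set.Ioi (0:ℝ),
      ((1 - O (η₁ * γ)) / (1 + γ) - (1 - O (η₂ * γ)) / (1 + γ)) := by
    refine (setIntegral_pos_iff_support_of_nonneg_ae ?_ ?_).mpr ?_
    · refine (ae_restrict_iff' measurableSet_Ioi).mpr (ae_of_all _ fun γ hγ => ?_)
      exact (hpos γ hγ).le
    · exact (hInt η₁ h₁).sub (hInt η₂ h₂)
    · refine lt_of_lt_of_le ?_ (measure_mono (Set.subset_inter (fun γ hγ => ?_) le_rfl))
      · rw [Real.volume_Ioi]; exact ENNReal.zero_lt_top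
      · exact Function.mem_support.mpr (ne_of_gt (hpos γ hγ))
  have hsub : R η₁ - R η₂ = ∫ γ in Set.Ioi (0:ℝ),
      ((1 - O (η₁ * γ)) / (1 + γ) - (1 - O (η₂ * γ)) / (1 + γ)) := by
    rw [hR, hR, ← integral_sub (hInt η₁ h₁) (hInt η₂ h₂)]
  rw [← hsub] at key
  linarith
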